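/- For a word w of length n over the free Lie ring, the integer c(w) (the nonnegative generator of the ideal {(P,w) : P ∈ L_ℤ(A)} of ℤ) is either zero or equals the greatest common divisor of the nonzero coefficients appearing in the polynomial l*(w). -/

import Mathlib

open MonoidAlgebra

attribute [local instance 100] LieRing.ofAssociativeRing

/-- The word `w` viewed as a monomial in the free associative algebra `K⟨A⟩`. -/
noncomputable def word (K : Type*) [CommRing K] {A : Type*} (w : List A) :
    MonoidAlgebra K (FreeMonoid A) :=
  MonoidAlgebra.single (FreeMonoid.ofList w) 1

/-- The adjoint `l*` of the left-normed Lie bracketing, defined by the recursion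
`l*(ε) = 0`, `l*(a) = a`, `l*(aub) = l*(au)·b − l*(ub)·a`. -/
noncomputable def lstar (K : Type*) [CommRing K] {A : Type*} :
    List A → MonoidAlgebra K (FreeMonoid A)
  | [] => 0
  | [a] => word K [a]
  | a :: b :: r =>
      lstar K (a :: (b :: r).dropLast) * word K [(b :: r).getLast (by simp)]
        - lstar K (b :: r) * word K [a]
  termination_by w => w.length
  decreasing_by
    · simp [List.length_dropLast]
    · simp

/-- The free Lie algebra `L_K(A)`: the Lie subalgebra of `K⟨A⟩` generated by the letters. -/
noncomputable def freeLie (K : Type*) [CommRing K] (A : Type*) :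
    LieSubalgebra K (MonoidAlgebra K (FreeMonoid A)) :=
  LieSubalgebra.lieSpan K _ {P | ∃ a : A, P = word K [a]}

namespace CGcdAux

open scoped Classical

variable {A : Type*}

lemma ofList_inj {l1 l2 : List A} (h : FreeMonoid.ofList l1 = FreeMonoid.ofList l2) :
    l1 = l2 := FreeMonoid.ofList.injective h

lemma ofList_ne_of_len {l1 l2 : List A} (h : l1.length ≠ l2.length) :
    FreeMonoid.ofList l1 ≠ FreeMonoid.ofList l2 :=
  fun hh => h (congrArg List.length (ofList_inj hh))

/-- coefficient of `P·x` on a word ending with `d`. -/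
lemma coeff_mul_letter (P : MonoidAlgebra ℤ (FreeMonoid A)) (x d : A) (v : List A) :
    (P * word ℤ [x]).coeff (FreeMonoid.ofList (v ++ [d])) =
      if d = x then P.coeff (FreeMonoid.ofList v) else 0 := by
  unfold word
  split_ifs with h
  · subst h
    rw [MonoidAlgebra.coeff_mul_single_eq_coeff_mul (m₂ := FreeMonoid.ofList v), mul_one]
    intro g _
    rw [FreeMonoid.ofList_append]
    exact mul_left_inj _
  · apply MonoidAlgebra.mul_single_apply_of_not_exists_mul
    rintro ⟨g, hg⟩
    apply h
    have h1 := congrArg FreeMonoid.toList hg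
    simp only [FreeMonoid.toList_mul, FreeMonoid.toList_ofList] at h1
    have h2 := congrArg List.getLast? h1
    simpa [List.getLast?_concat] using h2

lemma coeff_mul_letter_nil (P : MonoidAlgebra ℤ (FreeMonoid A)) (x : A) :
    (P * word ℤ [x]).coeff (FreeMonoid.ofList []) = 0 := by
  unfold word
  apply MonoidAlgebra.mul_single_apply_of_not_exists_mul
  rintro ⟨g, hg⟩
  have h1 := congrArg FreeMonoid.toList hg
  simp only [FreeMonoid.toList_mul, FreeMonoid.toList_ofList] at h1
  simp at h1

lemma coeff_letter_mul (P : MonoidAlgebra ℤ (FreeMonoid A)) (x d : A) (v : List A) :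
    (word ℤ [x] * P).coeff (FreeMonoid.ofList (d :: v)) =
      if d = x then P.coeff (FreeMonoid.ofList v) else 0 := by
  unfold word
  split_ifs with h
  · subst h
    rw [MonoidAlgebra.coeff_single_mul_eq_mul_coeff (m₂ := FreeMonoid.ofList v), one_mul]
    intro g _
    rw [show (d :: v) = [d] ++ v from rfl, FreeMonoid.ofList_append]
    exact mul_right_inj _
  · apply MonoidAlgebra.single_mul_apply_of_not_exists_mul
    rintro ⟨g, hg⟩
    apply h
    have h1 := congrArg FreeMonoid.toList hg
    simp only [FreeMonoid.toList_mul, FreeMonoid.toList_ofList] at h1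
    simpa using congrArg List.head? h1

lemma coeff_letter_mul_nil (P : MonoidAlgebra ℤ (FreeMonoid A)) (x : A) :
    (word ℤ [x] * P).coeff (FreeMonoid.ofList []) = 0 := by
  unfold word
  apply MonoidAlgebra.single_mul_apply_of_not_exists_mul
  rintro ⟨g, hg⟩
  have h1 := congrArg FreeMonoid.toList hg
  simp only [FreeMonoid.toList_mul, FreeMonoid.toList_ofList] at h1
  simp at h1

/-- the left-normed Lie bracketing of a word -/
noncomputable def lnb : List A → MonoidAlgebra ℤ (FreeMonoid A)
  | [] => 0
  | a :: t => t.foldl (fun P b => ⁅P, word ℤ [b]⁆) (word ℤ [a])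

lemma lnb_nil : lnb ([] : List A) = 0 := rfl

lemma lnb_singleton (a : A) : lnb [a] = word ℤ [a] := rfl

lemma lnb_append (v : List A) (hv : v ≠ []) (d : A) :
    lnb (v ++ [d]) = ⁅lnb v, word ℤ [d]⁆ := by
  match v with
  | a :: t => simp [lnb, List.foldl_append]

lemma lnb_coeff (v : List A) (hv : v ≠ []) (d : A) (z : FreeMonoid A) :
    (lnb (v ++ [d])).coeff z = (lnb v * word ℤ [d]).coeff z - (word ℤ [d] * lnb v).coeff z := by
  rw [lnb_append v hv d, Ring.lie_def, MonoidAlgebra.coeff_sub, Finsupp.sub_apply]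

/-- The key duality: the coefficient of `w` in `l(v)` equals the coefficient of `v`
in `l*(w)`. -/
lemma lnb_eval : (w : List A) → ∀ v : List A,
    (lnb v).coeff (FreeMonoid.ofList w) = (lstar ℤ w).coeff (FreeMonoid.ofList v)
  | [] => by
    intro v
    rw [lstar]
    induction v using List.reverseRecOn with
    | nil => simp [lnb_nil]
    | append_singleton v' d _ =>
      rcases eq_or_ne v' [] with rfl | hv'
      · simp only [List.nil_append, lnb_singleton, MonoidAlgebra.coeff_zero, Finsupp.coe_zero, Pi.zero_apply]
        unfold word
        rw [MonoidAlgebra.coeff_single_apply, if_neg (ofList_ne_of_len (by simp))]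
      · rw [lnb_coeff v' hv' d, coeff_mul_letter_nil, coeff_letter_mul_nil]
        simp
  | [a] => by
    intro v
    rw [lstar]
    induction v using List.reverseRecOn with
    | nil =>
      simp only [lnb_nil, MonoidAlgebra.coeff_zero, Finsupp.coe_zero, Pi.zero_apply]
      unfold word
      rw [MonoidAlgebra.coeff_single_apply, if_neg (ofList_ne_of_len (by simp))]
    | append_singleton v' d _ =>
      rcases eq_or_ne v' [] with rfl | hv'
      · simp only [List.nil_append, lnb_singleton]
        unfold word
        rw [MonoidAlgebra.coeff_single_apply, MonoidAlgebra.coeff_single_apply]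
        by_cases h : a = d
        · subst h; simp
        · rw [if_neg (fun hh => h (List.head_eq_of_cons_eq (ofList_inj hh)).symm),
            if_neg (fun hh => h (List.head_eq_of_cons_eq (ofList_inj hh)))]
      · rw [lnb_coeff v' hv' d,
          show ([a] : List A) = [] ++ [a] from rfl, coeff_mul_letter,
          show (([] : List A) ++ [a]) = a :: [] from rfl, coeff_letter_mul]
        unfold word
        rw [MonoidAlgebra.coeff_single_apply, if_neg (ofList_ne_of_len (by simp [hv']))]
        simp
  | a :: b :: r => by
    have hsne : (b :: r) ≠ [] := by simp
    have IH1 := lnb_eval (a :: (b :: r).dropLast)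
    have IH2 := lnb_eval (b :: r)
    intro v
    rw [lstar]
    set u := (b :: r).dropLast with hu
    set c := (b :: r).getLast (by simp) with hc
    have husc : u ++ [c] = b :: r := List.dropLast_append_getLast hsne
    have hw : a :: b :: r = (a :: u) ++ [c] := by
      rw [List.cons_append, husc]
    induction v using List.reverseRecOn with
    | nil =>
      rw [lnb_nil, MonoidAlgebra.coeff_sub, Finsupp.sub_apply, coeff_mul_letter_nil, coeff_mul_letter_nil]
      simp
    | append_singleton v' d _ =>
      rw [MonoidAlgebra.coeff_sub, Finsupp.sub_apply, coeff_mul_letter, coeff_mul_letter, ← IH1 v', ← IH2 v']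
      rcases eq_or_ne v' [] with rfl | hv'
      · simp only [lnb_nil, MonoidAlgebra.coeff_zero, Finsupp.coe_zero, Pi.zero_apply, ite_self, sub_zero,
          List.nil_append, lnb_singleton]
        unfold word
        rw [MonoidAlgebra.coeff_single_apply, if_neg (ofList_ne_of_len (by simp))]
      · rw [lnb_coeff v' hv' d]
        rw [show FreeMonoid.ofList (a :: b :: r) = FreeMonoid.ofList ((a :: u) ++ [c]) from
          congrArg _ hw]
        rw [coeff_mul_letter]
        rw [show FreeMonoid.ofList ((a :: u) ++ [c]) = FreeMonoid.ofList (a :: (u ++ [c])) from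
          rfl]
        rw [coeff_letter_mul, husc]
        simp only [show (c = d) ↔ (d = c) from eq_comm, show (a = d) ↔ (d = a) from eq_comm]
  termination_by w => w.length
  decreasing_by
    · simp [List.length_dropLast]
    · simp

lemma word_mem_freeLie (a : A) : word ℤ [a] ∈ freeLie ℤ A :=
  LieSubalgebra.subset_lieSpan ⟨a, rfl⟩

lemma lnb_mem_freeLie (v : List A) : lnb v ∈ freeLie ℤ A := by
  cases v with
  | nil => rw [lnb_nil]; exact (freeLie ℤ A).zero_mem
  | cons a t =>
    show t.foldl (fun P b => ⁅P, word ℤ [b]⁆) (word ℤ [a]) ∈ _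
    have key : ∀ (t : List A) (P : MonoidAlgebra ℤ (FreeMonoid A)), P ∈ freeLie ℤ A →
        t.foldl (fun P b => ⁅P, word ℤ [b]⁆) P ∈ freeLie ℤ A := by
      intro t
      induction t with
      | nil => intro P hP; exact hP
      | cons b t ih =>
        intro P hP
        exact ih _ ((freeLie ℤ A).lie_mem hP (word_mem_freeLie b))
    exact key t _ (word_mem_freeLie a)

lemma lie_letter_mem (d : A) {P : MonoidAlgebra ℤ (FreeMonoid A)}
    (hP : P ∈ Submodule.span ℤ (Set.range (lnb (A := A)))) :
    ⁅P, word ℤ [d]⁆ ∈ Submodule.span ℤ (Set.range (lnb (A := A))) := by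
  induction hP using Submodule.span_induction with
  | mem x hx =>
    obtain ⟨v, rfl⟩ := hx
    rcases eq_or_ne v [] with rfl | hv
    · rw [lnb_nil, zero_lie]; exact zero_mem _
    · rw [← lnb_append v hv d]; exact Submodule.subset_span ⟨_, rfl⟩
  | zero => rw [zero_lie]; exact zero_mem _
  | add x y hx hy ihx ihy => rw [add_lie]; exact add_mem ihx ihy
  | smul a x hx ihx => rw [smul_lie]; exact Submodule.smul_mem _ a ihx

lemma lie_lnb_mem (v : List A) : ∀ u : List A,
    ⁅lnb u, lnb v⁆ ∈ Submodule.span ℤ (Set.range (lnb (A := A))) := by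
  induction v using List.reverseRecOn with
  | nil => intro u; rw [lnb_nil, lie_zero]; exact zero_mem _
  | append_singleton v d ih =>
    intro u
    rcases eq_or_ne u [] with rfl | hu
    · rw [lnb_nil, zero_lie]; exact zero_mem _
    rcases eq_or_ne v [] with rfl | hv
    · rw [List.nil_append, lnb_singleton, ← lnb_append u hu d]
      exact Submodule.subset_span ⟨_, rfl⟩
    · rw [lnb_append v hv d, leibniz_lie]
      apply add_mem
      · exact lie_letter_mem d (ih u)
      · rw [← lnb_append u hu d, ← lie_skew]
        exact neg_mem (ih (u ++ [d]))

lemma freeLie_le_span {Q : MonoidAlgebra ℤ (FreeMonoid A)} (hQ : Q ∈ freeLie ℤ A) :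
    Q ∈ Submodule.span ℤ (Set.range (lnb (A := A))) := by
  have hclosed : ∀ x ∈ Submodule.span ℤ (Set.range (lnb (A := A))),
      ∀ y ∈ Submodule.span ℤ (Set.range (lnb (A := A))),
      ⁅x, y⁆ ∈ Submodule.span ℤ (Set.range (lnb (A := A))) := by
    intro x hx
    induction hx using Submodule.span_induction with
    | mem x hx =>
      obtain ⟨u, rfl⟩ := hx
      intro y hy
      induction hy using Submodule.span_induction with
      | mem y hy => obtain ⟨v, rfl⟩ := hy; exact lie_lnb_mem v u
      | zero => rw [lie_zero]; exact zero_mem _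
      | add y z hy hz ihy ihz => rw [lie_add]; exact add_mem ihy ihz
      | smul a y hy ihy => rw [lie_smul]; exact Submodule.smul_mem _ a ihy
    | zero => intro y hy; rw [zero_lie]; exact zero_mem _
    | add x y hx hy ihx ihy =>
      intro z hz; rw [add_lie]; exact add_mem (ihx z hz) (ihy z hz)
    | smul a x hx ihx =>
      intro z hz; rw [smul_lie]; exact Submodule.smul_mem _ a (ihx z hz)
  let K : LieSubalgebra ℤ (MonoidAlgebra ℤ (FreeMonoid A)) :=
    { Submodule.span ℤ (Set.range (lnb (A := A))) with
      lie_mem' := fun {x y} hx hy => hclosed x hx y hy }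
  have hle : freeLie ℤ A ≤ K := by
    rw [freeLie, LieSubalgebra.lieSpan_le]
    rintro P ⟨a, rfl⟩
    show word ℤ [a] ∈ Submodule.span ℤ (Set.range (lnb (A := A)))
    rw [← lnb_singleton]
    exact Submodule.subset_span ⟨_, rfl⟩
  exact hle hQ

lemma dvd_eval (w : List A) (g : ℤ)
    (hg : ∀ x : FreeMonoid A, g ∣ (lstar ℤ w).coeff x) :
    ∀ Q ∈ Submodule.span ℤ (Set.range (lnb (A := A))), g ∣ Q.coeff (FreeMonoid.ofList w) := by
  intro Q hQ
  induction hQ using Submodule.span_induction with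
  | mem x hx => obtain ⟨v, rfl⟩ := hx; rw [lnb_eval w v]; exact hg _
  | zero => simp
  | add x y hx hy ihx ihy => rw [MonoidAlgebra.coeff_add, Finsupp.add_apply]; exact dvd_add ihx ihy
  | smul a x hx ihx => rw [MonoidAlgebra.coeff_smul_apply, smul_eq_mul]; exact ihx.mul_left a

end CGcdAux

/-- if `c ≥ 0` generates the ideal `{(P,w) : P ∈ L_ℤ(A)}` of `ℤ`, then `c`
is zero (when `l*(w) = 0`) or equals the gcd of the nonzero coefficients of `l*(w)`. -/
theorem c_eq_gcd_coeffs_lstar {A : Type*} [Fintype A] (w : List A) (c : ℤ) (hc0 : 0 ≤ c)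
    (hgen : ∀ k : ℤ, (∃ Q ∈ freeLie ℤ A, Q.coeff (FreeMonoid.ofList w) = k) ↔ c ∣ k) :
    (lstar ℤ w = 0 → c = 0) ∧
    (lstar ℤ w ≠ 0 → c = Finset.gcd (lstar ℤ w).coeff.support (lstar ℤ w).coeff) := by
  classical
  have key : ∀ g : ℤ, (∀ x : FreeMonoid A, g ∣ (lstar ℤ w).coeff x) → g ∣ c := by
    intro g hg
    obtain ⟨Q, hQ, hQw⟩ := (hgen c).mpr dvd_rfl
    rw [← hQw]
    exact CGcdAux.dvd_eval w g hg Q (CGcdAux.freeLie_le_span hQ)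
  constructor
  · intro h0
    have h := key 0 (by intro x; rw [h0]; simp)
    simpa using h
  · intro _
    set g := Finset.gcd (lstar ℤ w).coeff.support ⇑(lstar ℤ w).coeff with hgdef
    have hgc : g ∣ c := by
      apply key
      intro x
      by_cases hx : x ∈ (lstar ℤ w).coeff.support
      · exact Finset.gcd_dvd hx
      · rw [Finsupp.notMem_support_iff.mp hx]; exact dvd_zero g
    have hcg : c ∣ g := by
      apply Finset.dvd_gcd
      intro x hx
      refine (hgen _).mp ⟨CGcdAux.lnb (FreeMonoid.toList x), CGcdAux.lnb_mem_freeLie _, ?_⟩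
      rw [CGcdAux.lnb_eval w (FreeMonoid.toList x), FreeMonoid.ofList_toList]
    have hg0 : 0 ≤ g := by
      have h1 : normalize g = g := Finset.normalize_gcd
      rw [← h1, ← Int.abs_eq_normalize]
      exact abs_nonneg _
    exact Int.dvd_antisymm hc0 hg0 hcg hgc
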